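/- For α > 0, b ≥ 0, and s > 0 with s^α > b, the Laplace transform of t ↦ t^{α−1} E_{α,α}(−b t^α) equals 1/(s^α + b). -/

import Mathlib

open MeasureTheory

open Real Set in
private lemma aux_pointwise (α s c : ℝ) (hα : 0 < α) (k : ℕ) {t : ℝ} (ht : 0 < t) :
    Real.exp (-s * t) * (t ^ (α - 1) * ((c * t ^ α) ^ k / Real.Gamma (α * k + α))) =
      (c ^ k / Real.Gamma (α * k + α)) * (t ^ (α * (k + 1) - 1) * Real.exp (-(s * t))) := by
  have h1 : (c * t ^ α) ^ k = c ^ k * t ^ (α * k) := by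
    rw [mul_pow, ← Real.rpow_natCast (t ^ α), ← Real.rpow_mul ht.le]
  have h2 : t ^ (α * (k + 1) - 1) = t ^ (α - 1) * t ^ (α * k) := by
    rw [← Real.rpow_add ht]; ring_nf
  rw [h1, h2, neg_mul]; ring

open Real Set in
private lemma aux_integrable (α s c : ℝ) (hα : 0 < α) (hs : 0 < s) (k : ℕ) :
    IntegrableOn (fun t : ℝ => Real.exp (-s * t) *
      (t ^ (α - 1) * ((c * t ^ α) ^ k / Real.Gamma (α * k + α)))) (Set.Ioi 0) := by
  have hp : (0:ℝ) < α * (k + 1) := by positivity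
  have base : IntegrableOn (fun t : ℝ => t ^ (α * (k + 1) - 1) * Real.exp (-(s * t)))
      (Set.Ioi 0) := by
    have := integrableOn_rpow_mul_exp_neg_mul_rpow (p := 1) (s := α * (k + 1) - 1) (b := s)
      (by linarith) zero_lt_one hs
    refine this.congr_fun (fun t ht => ?_) measurableSet_Ioi
    simp only [Real.rpow_one, neg_mul]
  refine IntegrableOn.congr_fun (base.const_mul (c ^ k / Real.Gamma (α * k + α)))
    (fun t ht => ?_) measurableSet_Ioi
  exact (aux_pointwise α s c hα k ht).symm

open Real Set in
private lemma aux_integral (α s c : ℝ) (hα : 0 < α) (hs : 0 < s) (k : ℕ) :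
    ∫ t in Set.Ioi (0:ℝ), Real.exp (-s * t) *
      (t ^ (α - 1) * ((c * t ^ α) ^ k / Real.Gamma (α * k + α))) =
      (s ^ α)⁻¹ * (c * (s ^ α)⁻¹) ^ k := by
  have hp : (0:ℝ) < α * (k + 1) := by positivity
  have hΓ : Real.Gamma (α * k + α) = Real.Gamma (α * (k + 1)) := by ring_nf
  have hΓpos : 0 < Real.Gamma (α * k + α) := Real.Gamma_pos_of_pos (by positivity)
  rw [setIntegral_congr_fun measurableSet_Ioi
    (fun t (ht : 0 < t) => aux_pointwise α s c hα k ht),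
    MeasureTheory.integral_const_mul, Real.integral_rpow_mul_exp_neg_mul_Ioi hp hs]
  have hsr : (0:ℝ) < s ^ α := Real.rpow_pos_of_pos hs α
  have h3 : (1 / s) ^ (α * (k + 1)) = ((s ^ α)⁻¹) ^ (k + 1) := by
    have hk : ((k:ℝ) + 1) = ((k + 1 : ℕ) : ℝ) := by push_cast; ring
    rw [Real.rpow_mul (by positivity), hk, Real.rpow_natCast, one_div, Real.inv_rpow hs.le]
  have hne : Real.Gamma (α * (k + 1)) ≠ 0 := by rw [← hΓ]; exact hΓpos.ne'
  have h4 : c ^ k / Real.Gamma (α * (k + 1)) *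
      (((s ^ α)⁻¹) ^ (k + 1) * Real.Gamma (α * (k + 1))) = c ^ k * ((s ^ α)⁻¹) ^ (k + 1) := by
    field_simp
  rw [hΓ, h3, h4, mul_pow, pow_succ]
  ring

/-- For `α > 0`, `b ≥ 0` and `s > 0` with `s > 0` with `s^α > b`, the Laplace transform of
`t ↦ t^{α-1} E_{α,α}(-b t^α)` equals `1/(s^α + b)`. -/
theorem laplace_mittagLeffler_two (α b s : ℝ) (hα : 0 < α) (hb : 0 ≤ b) (hs : 0 < s)
    (hbs : b < s ^ α) :
    ∫ t in Set.Ioi (0:ℝ), Real.exp (-s * t) *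
        (t ^ (α - 1) * ∑' k : ℕ, (-b * t ^ α) ^ k / Real.Gamma (α * k + α)) =
      1 / (s ^ α + b) := by
  have hsr : (0:ℝ) < s ^ α := Real.rpow_pos_of_pos hs α
  set F : ℕ → ℝ → ℝ := fun k t => Real.exp (-s * t) *
    (t ^ (α - 1) * ((-b * t ^ α) ^ k / Real.Gamma (α * k + α))) with hF
  -- step 1: move tsum out
  have hstep1 : ∀ t : ℝ, Real.exp (-s * t) *
      (t ^ (α - 1) * ∑' k : ℕ, (-b * t ^ α) ^ k / Real.Gamma (α * k + α)) =
      ∑' k : ℕ, F k t := by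
    intro t
    rw [← tsum_mul_left, ← tsum_mul_left]
  simp_rw [hstep1]
  -- measurability
  have hmeas : ∀ k : ℕ, AEStronglyMeasurable (F k) (volume.restrict (Set.Ioi 0)) := by
    intro k
    apply Measurable.aestronglyMeasurable
    fun_prop
  -- the norm integrals
  have hnorm_int : ∀ k : ℕ, ∫ t in Set.Ioi (0:ℝ), ‖F k t‖ =
      (s ^ α)⁻¹ * (b * (s ^ α)⁻¹) ^ k := by
    intro k
    rw [← aux_integral α s b hα hs k]
    refine setIntegral_congr_fun measurableSet_Ioi (fun t (ht : 0 < t) => ?_)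
    have hΓpos : 0 < Real.Gamma (α * k + α) := Real.Gamma_pos_of_pos (by positivity)
    have htα : (0:ℝ) ≤ t ^ α := (Real.rpow_pos_of_pos ht α).le
    have : |(-b * t ^ α) ^ k| = (b * t ^ α) ^ k := by
      rw [abs_pow, abs_mul, abs_neg, abs_of_nonneg hb, abs_of_nonneg htα]
    rw [Real.norm_eq_abs, abs_mul, abs_mul, abs_div, this,
      abs_of_nonneg (Real.exp_pos _).le, abs_of_nonneg (Real.rpow_pos_of_pos ht _).le,
      abs_of_nonneg hΓpos.le]
  have hr1 : b * (s ^ α)⁻¹ < 1 := by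
    rw [← div_eq_mul_inv, div_lt_one hsr]; exact hbs
  have hr0 : 0 ≤ b * (s ^ α)⁻¹ := by positivity
  have hsum_norm : Summable (fun k : ℕ => (s ^ α)⁻¹ * (b * (s ^ α)⁻¹) ^ k) :=
    (summable_geometric_of_lt_one hr0 hr1).mul_left _
  -- interchange
  rw [MeasureTheory.integral_tsum hmeas ?_]
  · have hterm : ∀ k : ℕ, ∫ t in Set.Ioi (0:ℝ), F k t =
        (s ^ α)⁻¹ * ((-b) * (s ^ α)⁻¹) ^ k := fun k => aux_integral α s (-b) hα hs k
    simp_rw [hterm]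
    rw [tsum_mul_left, tsum_geometric_of_abs_lt_one (by
      rw [abs_mul, abs_neg, abs_of_nonneg hb, abs_of_nonneg (by positivity : (0:ℝ) ≤ (s^α)⁻¹)]
      exact hr1)]
    rw [neg_mul, sub_neg_eq_add]
    field_simp
  · -- summability of lintegrals
    have hlint : ∀ k : ℕ, ∫⁻ t in Set.Ioi (0:ℝ), ‖F k t‖ₑ =
        ENNReal.ofReal ((s ^ α)⁻¹ * (b * (s ^ α)⁻¹) ^ k) := by
      intro k
      have hint : IntegrableOn (F k) (Set.Ioi 0) := aux_integrable α s (-b) hα hs k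
      rw [← hnorm_int k, ← ofReal_integral_norm_eq_lintegral_enorm hint]
    simp_rw [hlint]
    rw [← ENNReal.ofReal_tsum_of_nonneg (fun k => by positivity) hsum_norm]
    exact ENNReal.ofReal_ne_top
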